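/- arXiv:2505.07240 — 8 statements merged into one kernel-verified Lean document; each statement's English description precedes it below -/
import Mathlib

section
/- Let K_R = diag(k1,k2,k3) be a diagonal matrix with distinct positive entries, and let Q ∈ SO(3). Define Ψ_K(Q) = (1/2)·tr(K_R(I₃ − Q)) and e_{K,R}(Q) = (1/2)·vee(K_R Q − Qᵀ K_R). Suppose Ψ_K(Q) < ψ for some ψ with 0 < ψ < h1. Then g1·‖e_{K,R}(Q)‖² ≤ Ψ_K(Q) ≤ g2·‖e_{K,R}(Q)‖², where g1 = h1/(h2 + h3²) and g2 = h3/(h1(h1 − ψ)). -/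
open Matrix

noncomputable section

/-- The vee map: sends a skew-symmetric 3×3 matrix `S` to `(S₃₂, S₁₃, S₂₁)`. -/
def vee (S : Matrix (Fin 3) (Fin 3) ℝ) : Fin 3 → ℝ := ![S 2 1, S 0 2, S 1 0]

/-- Euclidean norm on ℝ³. -/
def euclNorm (x : Fin 3 → ℝ) : ℝ := Real.sqrt (∑ i, x i ^ 2)

set_option maxHeartbeats 1000000 in
theorem aux0 (k1 k2 k3 ψ h1 h2 h3 ΨK N : ℝ)
    (q00 q01 q02 q10 q11 q12 q20 q21 q22 e0 e1 e2 : ℝ)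
    (hk1 : 0 < k1) (hk2 : 0 < k2) (hk3 : 0 < k3)
    (o00 : q00 * q00 + q10 * q10 + q20 * q20 = 1)
    (o11 : q01 * q01 + q11 * q11 + q21 * q21 = 1)
    (o22 : q02 * q02 + q12 * q12 + q22 * q22 = 1)
    (r00 : q00 * q00 + q01 * q01 + q02 * q02 = 1)
    (r11 : q10 * q10 + q11 * q11 + q12 * q12 = 1)
    (c00 : q00 = q11 * q22 - q12 * q21)
    (c11 : q11 = q00 * q22 - q02 * q20)
    (c22 : q22 = q00 * q11 - q01 * q10)
    (hh1 : h1 = min (k1 + k2) (min (k1 + k3) (k2 + k3)))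
    (hh2 : h2 = max ((k1 - k2) ^ 2) (max ((k1 - k3) ^ 2) ((k2 - k3) ^ 2)))
    (hh3 : h3 = max (k1 + k2) (max (k1 + k3) (k2 + k3)))
    (hPsi : ΨK = (k1 * (1 - q00) + k2 * (1 - q11) + k3 * (1 - q22)) / 2)
    (he0 : e0 = (k3 * q21 - k2 * q12) / 2)
    (he1 : e1 = (k1 * q02 - k3 * q20) / 2)
    (he2 : e2 = (k2 * q10 - k1 * q01) / 2)
    (hN : N = e0 ^ 2 + e1 ^ 2 + e2 ^ 2)
    (hψpos : 0 < ψ) (hψlt : ψ < h1) (hΨ : ΨK < ψ) :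
    h1 / (h2 + h3 ^ 2) * N ≤ ΨK ∧ ΨK ≤ h3 / (h1 * (h1 - ψ)) * N := by
  set t0 : ℝ := 1 + q00 + q11 + q22 with ht0def
  set t1 : ℝ := 1 + q00 - q11 - q22 with ht1def
  set t2 : ℝ := 1 - q00 + q11 - q22 with ht2def
  set t3 : ℝ := 1 - q00 - q11 + q22 with ht3def
  have id1 : t0 * t1 = (q21 - q12) ^ 2 := by
    rw [ht0def, ht1def]; linear_combination r00 - o11 - o22 + 2 * c00
  have id2 : t0 * t2 = (q02 - q20) ^ 2 := by
    rw [ht0def, ht2def]; linear_combination -o00 + r11 - o22 + 2 * c11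
  have id3 : t0 * t3 = (q10 - q01) ^ 2 := by
    rw [ht0def, ht3def]; linear_combination -r00 - r11 + o22 + 2 * c22
  have id4 : t2 * t3 = (q21 + q12) ^ 2 := by
    rw [ht2def, ht3def]; linear_combination r00 - o11 - o22 - 2 * c00
  have id5 : t1 * t3 = (q02 + q20) ^ 2 := by
    rw [ht1def, ht3def]; linear_combination -o00 + r11 - o22 - 2 * c11
  have id6 : t1 * t2 = (q10 + q01) ^ 2 := by
    rw [ht1def, ht2def]; linear_combination -r00 - r11 + o22 - 2 * c22
  have id7 : (q21 - q12) * (q21 + q12) = (q02 - q20) * (q02 + q20) := by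
    linear_combination o00 - r00 + o11 - r11
  have id8 : (q21 - q12) * (q21 + q12) = (q10 - q01) * (q10 + q01) := by
    linear_combination o11 - r11
  have hsum : t0 + t1 + t2 + t3 = 4 := by rw [ht0def, ht1def, ht2def, ht3def]; ring
  have sos0 : 4 * t0 = t0 ^ 2 + (q21 - q12) ^ 2 + (q02 - q20) ^ 2 + (q10 - q01) ^ 2 := by
    linear_combination (-t0) * hsum + id1 + id2 + id3
  have sos1 : 4 * t1 = t1 ^ 2 + (q21 - q12) ^ 2 + (q02 + q20) ^ 2 + (q10 + q01) ^ 2 := by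
    linear_combination (-t1) * hsum + id1 + id5 + id6
  have sos2 : 4 * t2 = t2 ^ 2 + (q02 - q20) ^ 2 + (q21 + q12) ^ 2 + (q10 + q01) ^ 2 := by
    linear_combination (-t2) * hsum + id2 + id4 + id6
  have sos3 : 4 * t3 = t3 ^ 2 + (q10 - q01) ^ 2 + (q21 + q12) ^ 2 + (q02 + q20) ^ 2 := by
    linear_combination (-t3) * hsum + id3 + id4 + id5
  have ht0 : 0 ≤ t0 := by
    linarith [sos0, sq_nonneg t0, sq_nonneg (q21 - q12), sq_nonneg (q02 - q20), sq_nonneg (q10 - q01)]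
  have ht1 : 0 ≤ t1 := by
    linarith [sos1, sq_nonneg t1, sq_nonneg (q21 - q12), sq_nonneg (q02 + q20), sq_nonneg (q10 + q01)]
  have ht2 : 0 ≤ t2 := by
    linarith [sos2, sq_nonneg t2, sq_nonneg (q02 - q20), sq_nonneg (q21 + q12), sq_nonneg (q10 + q01)]
  have ht3 : 0 ≤ t3 := by
    linarith [sos3, sq_nonneg t3, sq_nonneg (q10 - q01), sq_nonneg (q21 + q12), sq_nonneg (q02 + q20)]
  have hPsi4 : 4 * ΨK = (k2 + k3) * t1 + (k1 + k3) * t2 + (k1 + k2) * t3 := by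
    rw [hPsi, ht1def, ht2def, ht3def]; ring
  have hE16 : 16 * N =
      t0 * ((k2 + k3) ^ 2 * t1 + (k1 + k3) ^ 2 * t2 + (k1 + k2) ^ 2 * t3)
      + ((k3 - k2) ^ 2 * t2 * t3 + (k1 - k3) ^ 2 * t1 * t3 + (k2 - k1) ^ 2 * t1 * t2) := by
    rw [hN, he0, he1, he2]
    linear_combination (-(k2 + k3) ^ 2) * id1 + (-(k1 + k3) ^ 2) * id2 + (-(k1 + k2) ^ 2) * id3
      + (-(k3 - k2) ^ 2) * id4 + (-(k1 - k3) ^ 2) * id5 + (-(k2 - k1) ^ 2) * id6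
      + (-2 * (k1 + k3) * (k1 - k3)) * id7 + (-2 * (k1 + k2) * (k2 - k1)) * id8
  have hl1 : h1 ≤ k1 + k2 := hh1 ▸ min_le_left _ _
  have hl2 : h1 ≤ k1 + k3 := hh1 ▸ le_trans (min_le_right _ _) (min_le_left _ _)
  have hl3 : h1 ≤ k2 + k3 := hh1 ▸ le_trans (min_le_right _ _) (min_le_right _ _)
  have hu1 : k1 + k2 ≤ h3 := hh3 ▸ le_max_left _ _
  have hu2 : k1 + k3 ≤ h3 := hh3 ▸ le_trans (le_max_left _ _) (le_max_right _ _)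
  have hu3 : k2 + k3 ≤ h3 := hh3 ▸ le_trans (le_max_right _ _) (le_max_right _ _)
  have hd1 : (k1 - k2) ^ 2 ≤ h2 := hh2 ▸ le_max_left _ _
  have hd2 : (k1 - k3) ^ 2 ≤ h2 := hh2 ▸ le_trans (le_max_left _ _) (le_max_right _ _)
  have hd3 : (k2 - k3) ^ 2 ≤ h2 := hh2 ▸ le_trans (le_max_right _ _) (le_max_right _ _)
  have hh1pos : 0 < h1 := by
    rw [hh1]; simp only [lt_min_iff]
    exact ⟨by linarith, by linarith, by linarith⟩
  have hh1nn : 0 ≤ h1 := le_of_lt hh1pos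
  have hh3pos : 0 < h3 := lt_of_lt_of_le hh1pos (le_trans hl1 hu1)
  have hh3nn : 0 ≤ h3 := le_of_lt hh3pos
  have hh2nonneg : 0 ≤ h2 := le_trans (sq_nonneg _) hd1
  have hh13 : h1 ≤ h3 := le_trans hl1 hu1
  set S1 : ℝ := (k2 + k3) * t1 + (k1 + k3) * t2 + (k1 + k2) * t3 with hS1def
  set S2 : ℝ := (k2 + k3) ^ 2 * t1 + (k1 + k3) ^ 2 * t2 + (k1 + k2) ^ 2 * t3 with hS2def
  have hS1nonneg : 0 ≤ S1 := by
    have a1 := mul_nonneg (by linarith : (0:ℝ) ≤ k2 + k3) ht1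
    have a2 := mul_nonneg (by linarith : (0:ℝ) ≤ k1 + k3) ht2
    have a3 := mul_nonneg (by linarith : (0:ℝ) ≤ k1 + k2) ht3
    rw [hS1def]; linarith
  have hS2nonneg : 0 ≤ S2 := by
    have a1 := mul_nonneg (sq_nonneg (k2 + k3)) ht1
    have a2 := mul_nonneg (sq_nonneg (k1 + k3)) ht2
    have a3 := mul_nonneg (sq_nonneg (k1 + k2)) ht3
    rw [hS2def]; linarith
  have hPnonneg : 0 ≤ (k3 - k2) ^ 2 * t2 * t3 + (k1 - k3) ^ 2 * t1 * t3 + (k2 - k1) ^ 2 * t1 * t2 := by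
    have a1 := mul_nonneg (mul_nonneg (sq_nonneg (k3 - k2)) ht2) ht3
    have a2 := mul_nonneg (mul_nonneg (sq_nonneg (k1 - k3)) ht1) ht3
    have a3 := mul_nonneg (mul_nonneg (sq_nonneg (k2 - k1)) ht1) ht2
    linarith
  have hS2h3 : S2 ≤ h3 * S1 := by
    have a1 : 0 ≤ (k2 + k3) * (h3 - (k2 + k3)) * t1 :=
      mul_nonneg (mul_nonneg (by linarith) (by linarith)) ht1
    have a2 : 0 ≤ (k1 + k3) * (h3 - (k1 + k3)) * t2 :=
      mul_nonneg (mul_nonneg (by linarith) (by linarith)) ht2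
    have a3 : 0 ≤ (k1 + k2) * (h3 - (k1 + k2)) * t3 :=
      mul_nonneg (mul_nonneg (by linarith) (by linarith)) ht3
    rw [hS2def, hS1def]; linarith [a1, a2, a3]
  have hS2h1 : h1 * S1 ≤ S2 := by
    have a1 : 0 ≤ (k2 + k3) * ((k2 + k3) - h1) * t1 :=
      mul_nonneg (mul_nonneg (by linarith) (by linarith)) ht1
    have a2 : 0 ≤ (k1 + k3) * ((k1 + k3) - h1) * t2 :=
      mul_nonneg (mul_nonneg (by linarith) (by linarith)) ht2
    have a3 : 0 ≤ (k1 + k2) * ((k1 + k2) - h1) * t3 :=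
      mul_nonneg (mul_nonneg (by linarith) (by linarith)) ht3
    rw [hS2def, hS1def]; linarith [a1, a2, a3]
  have hT1 : h1 * (t1 + t2 + t3) ≤ S1 := by
    have a1 : 0 ≤ ((k2 + k3) - h1) * t1 := mul_nonneg (by linarith) ht1
    have a2 : 0 ≤ ((k1 + k3) - h1) * t2 := mul_nonneg (by linarith) ht2
    have a3 : 0 ≤ ((k1 + k2) - h1) * t3 := mul_nonneg (by linarith) ht3
    rw [hS1def]; linarith [a1, a2, a3]
  have hTle : t1 + t2 + t3 ≤ 4 := by linarith
  have hTnn : 0 ≤ t1 + t2 + t3 := by linarith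
  have ht0le : t0 ≤ 4 := by linarith
  have hNnonneg : 0 ≤ N := by rw [hN]; positivity
  constructor
  · rw [div_mul_eq_mul_div, div_le_iff₀ (by positivity)]
    have e1 : h1 * (t0 * S2) ≤ 4 * h3 ^ 2 * S1 := by
      have b1 : t0 * S2 ≤ 4 * S2 := mul_le_mul_of_nonneg_right ht0le hS2nonneg
      have b2 : h1 * (t0 * S2) ≤ h1 * (4 * S2) := mul_le_mul_of_nonneg_left b1 hh1nn
      have b3 : h1 * S2 ≤ h3 * S2 := mul_le_mul_of_nonneg_right hh13 hS2nonneg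
      have b4 : h3 * S2 ≤ h3 * (h3 * S1) := mul_le_mul_of_nonneg_left hS2h3 hh3nn
      linarith [b2, b3, b4]
    have e2 : h1 * ((k3 - k2) ^ 2 * t2 * t3 + (k1 - k3) ^ 2 * t1 * t3 + (k2 - k1) ^ 2 * t1 * t2)
        ≤ 4 * h2 * S1 := by
      have a1 : (k3 - k2) ^ 2 * (t2 * t3) ≤ h2 * (t2 * t3) :=
        mul_le_mul_of_nonneg_right (by linarith [hd3]) (mul_nonneg ht2 ht3)
      have a2 : (k1 - k3) ^ 2 * (t1 * t3) ≤ h2 * (t1 * t3) :=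
        mul_le_mul_of_nonneg_right hd2 (mul_nonneg ht1 ht3)
      have a3 : (k2 - k1) ^ 2 * (t1 * t2) ≤ h2 * (t1 * t2) :=
        mul_le_mul_of_nonneg_right (by linarith [hd1]) (mul_nonneg ht1 ht2)
      have base : t2 * t3 + t1 * t3 + t1 * t2 ≤ (t1 + t2 + t3) ^ 2 := by
        linarith [sq_nonneg t1, sq_nonneg t2, sq_nonneg t3, mul_nonneg ht1 ht2,
          mul_nonneg ht1 ht3, mul_nonneg ht2 ht3]
      have hP2 : (k3 - k2) ^ 2 * t2 * t3 + (k1 - k3) ^ 2 * t1 * t3 + (k2 - k1) ^ 2 * t1 * t2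
          ≤ h2 * (t1 + t2 + t3) ^ 2 := by
        have := mul_le_mul_of_nonneg_left base hh2nonneg
        linarith [a1, a2, a3]
      have b1 := mul_le_mul_of_nonneg_left hP2 hh1nn
      have c1 : h1 * ((t1 + t2 + t3) * (t1 + t2 + t3)) ≤ S1 * (t1 + t2 + t3) := by
        have := mul_le_mul_of_nonneg_right hT1 hTnn
        linarith [this]
      have c2 : S1 * (t1 + t2 + t3) ≤ S1 * 4 := mul_le_mul_of_nonneg_left hTle hS1nonneg
      have c3 : h1 * ((t1 + t2 + t3) * (t1 + t2 + t3)) ≤ 4 * S1 := by linarith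
      have c4 := mul_le_mul_of_nonneg_left c3 hh2nonneg
      linarith [b1, c4]
    have key : h1 * (16 * N) ≤ 4 * h2 * S1 + 4 * h3 ^ 2 * S1 := by
      have heq : h1 * (16 * N) = h1 * (t0 * S2)
          + h1 * ((k3 - k2) ^ 2 * t2 * t3 + (k1 - k3) ^ 2 * t1 * t3 + (k2 - k1) ^ 2 * t1 * t2) := by
        rw [hE16]; ring
      linarith [e1, e2, heq]
    rw [← hPsi4] at key
    linarith [key]
  · rw [div_mul_eq_mul_div, le_div_iff₀ (mul_pos hh1pos (by linarith : (0:ℝ) < h1 - ψ))]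
    have hS1ub : S1 < 4 * ψ := by linarith [hPsi4, hΨ]
    have hscale : h1 * t0 + h1 * t1 + h1 * t2 + h1 * t3 = 4 * h1 := by
      linear_combination h1 * hsum
    have ht0lb : 4 * (h1 - ψ) ≤ h1 * t0 := by linarith [hT1, hS1ub, hscale]
    have c6 : (4 * (h1 - ψ)) * (h1 * S1) ≤ (h1 * t0) * (h1 * S1) :=
      mul_le_mul_of_nonneg_right ht0lb (mul_nonneg hh1nn hS1nonneg)
    have c1 : t0 * (h1 * S1) ≤ t0 * S2 := mul_le_mul_of_nonneg_left hS2h1 ht0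
    have c5 : h1 * (t0 * (h1 * S1)) ≤ h3 * (t0 * (h1 * S1)) :=
      mul_le_mul_of_nonneg_right hh13 (mul_nonneg ht0 (mul_nonneg hh1nn hS1nonneg))
    have c2 : h3 * (t0 * (h1 * S1)) ≤ h3 * (t0 * S2) := mul_le_mul_of_nonneg_left c1 hh3nn
    have c3 : t0 * S2 ≤ 16 * N := by linarith [hE16, hPnonneg]
    have c4 : h3 * (t0 * S2) ≤ h3 * (16 * N) := mul_le_mul_of_nonneg_left c3 hh3nn
    have key : 4 * (h1 * (h1 - ψ)) * S1 ≤ h3 * (16 * N) := by linarith [c6, c5, c2, c4]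
    rw [← hPsi4] at key
    linarith [key]

theorem stmt0 (k1 k2 k3 ψ : ℝ)
    (hk1 : 0 < k1) (hk2 : 0 < k2) (hk3 : 0 < k3)
    (hd12 : k1 ≠ k2) (hd13 : k1 ≠ k3) (hd23 : k2 ≠ k3)
    (KR : Matrix (Fin 3) (Fin 3) ℝ) (hKR : KR = Matrix.diagonal ![k1, k2, k3])
    (Q : Matrix (Fin 3) (Fin 3) ℝ) (hQ : Qᵀ * Q = 1) (hQdet : Q.det = 1)
    (h1 h2 h3 g1 g2 ΨK : ℝ) (eKR : Fin 3 → ℝ)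
    (hh1 : h1 = min (k1 + k2) (min (k1 + k3) (k2 + k3)))
    (hh2 : h2 = max ((k1 - k2) ^ 2) (max ((k1 - k3) ^ 2) ((k2 - k3) ^ 2)))
    (hh3 : h3 = max (k1 + k2) (max (k1 + k3) (k2 + k3)))
    (hg1 : g1 = h1 / (h2 + h3 ^ 2))
    (hg2 : g2 = h3 / (h1 * (h1 - ψ)))
    (hΨK : ΨK = (1 / 2) * (KR * (1 - Q)).trace)
    (heKR : eKR = (1 / 2 : ℝ) • vee (KR * Q - Qᵀ * KR))
    (hψpos : 0 < ψ) (hψlt : ψ < h1) (hΨ : ΨK < ψ) :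
    g1 * euclNorm eKR ^ 2 ≤ ΨK ∧ ΨK ≤ g2 * euclNorm eKR ^ 2 := by
  have hQQt : Q * Qᵀ = 1 := mul_eq_one_comm.mp hQ
  have hadj : Q.adjugate = Qᵀ := by
    have h := Matrix.mul_adjugate Q
    rw [hQdet, one_smul] at h
    have h2' : Qᵀ * (Q * Q.adjugate) = Qᵀ := by rw [h, mul_one]
    rwa [← mul_assoc, hQ, one_mul] at h2'
  have o00 : Q 0 0 * Q 0 0 + Q 1 0 * Q 1 0 + Q 2 0 * Q 2 0 = 1 := by
    have := congrFun (congrFun hQ 0) 0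
    simpa [Matrix.mul_apply, Fin.sum_univ_three, Matrix.one_apply] using this
  have o11 : Q 0 1 * Q 0 1 + Q 1 1 * Q 1 1 + Q 2 1 * Q 2 1 = 1 := by
    have := congrFun (congrFun hQ 1) 1
    simpa [Matrix.mul_apply, Fin.sum_univ_three, Matrix.one_apply] using this
  have o22 : Q 0 2 * Q 0 2 + Q 1 2 * Q 1 2 + Q 2 2 * Q 2 2 = 1 := by
    have := congrFun (congrFun hQ 2) 2
    simpa [Matrix.mul_apply, Fin.sum_univ_three, Matrix.one_apply] using this
  have r00 : Q 0 0 * Q 0 0 + Q 0 1 * Q 0 1 + Q 0 2 * Q 0 2 = 1 := by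
    have := congrFun (congrFun hQQt 0) 0
    simpa [Matrix.mul_apply, Fin.sum_univ_three, Matrix.one_apply] using this
  have r11 : Q 1 0 * Q 1 0 + Q 1 1 * Q 1 1 + Q 1 2 * Q 1 2 = 1 := by
    have := congrFun (congrFun hQQt 1) 1
    simpa [Matrix.mul_apply, Fin.sum_univ_three, Matrix.one_apply] using this
  have hadj3 := Matrix.adjugate_fin_three Q
  rw [hadj] at hadj3
  have c00 : Q 0 0 = Q 1 1 * Q 2 2 - Q 1 2 * Q 2 1 := by
    have := congrFun (congrFun hadj3 0) 0
    simpa using this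
  have c11 : Q 1 1 = Q 0 0 * Q 2 2 - Q 0 2 * Q 2 0 := by
    have := congrFun (congrFun hadj3 1) 1
    simpa using this
  have c22 : Q 2 2 = Q 0 0 * Q 1 1 - Q 0 1 * Q 1 0 := by
    have := congrFun (congrFun hadj3 2) 2
    simpa using this
  have hPsi : ΨK = (k1 * (1 - Q 0 0) + k2 * (1 - Q 1 1) + k3 * (1 - Q 2 2)) / 2 := by
    rw [hΨK, hKR]
    simp [Matrix.trace_fin_three, Matrix.mul_apply, Fin.sum_univ_three, Matrix.one_apply,
      Matrix.diagonal, Matrix.sub_apply]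
    ring
  have he0 : eKR 0 = (k3 * Q 2 1 - k2 * Q 1 2) / 2 := by
    rw [heKR, hKR]
    simp [vee, Matrix.mul_apply, Fin.sum_univ_three, Matrix.sub_apply, Matrix.diagonal,
      Matrix.transpose_apply]
    ring
  have he1 : eKR 1 = (k1 * Q 0 2 - k3 * Q 2 0) / 2 := by
    rw [heKR, hKR]
    simp [vee, Matrix.mul_apply, Fin.sum_univ_three, Matrix.sub_apply, Matrix.diagonal,
      Matrix.transpose_apply]
    ring
  have he2 : eKR 2 = (k2 * Q 1 0 - k1 * Q 0 1) / 2 := by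
    rw [heKR, hKR]
    simp [vee, Matrix.mul_apply, Fin.sum_univ_three, Matrix.sub_apply, Matrix.diagonal,
      Matrix.transpose_apply]
    ring
  have hNsum : euclNorm eKR ^ 2 = eKR 0 ^ 2 + eKR 1 ^ 2 + eKR 2 ^ 2 := by
    rw [euclNorm, Real.sq_sqrt (by positivity), Fin.sum_univ_three]
  have main := aux0 k1 k2 k3 ψ h1 h2 h3 ΨK (euclNorm eKR ^ 2)
    (Q 0 0) (Q 0 1) (Q 0 2) (Q 1 0) (Q 1 1) (Q 1 2) (Q 2 0) (Q 2 1) (Q 2 2)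
    (eKR 0) (eKR 1) (eKR 2) hk1 hk2 hk3 o00 o11 o22 r00 r11 c00 c11 c22
    hh1 hh2 hh3 hPsi he0 he1 he2 hNsum hψpos hψlt hΨ
  rw [hg1, hg2]
  exact main
end
end

section
/- Let K_R = diag(k1,k2,k3) be a diagonal 3×3 matrix with positive entries and let G ∈ SO(3). Define C = (1/2)(tr(K_R G)·I₃ − K_R G). Then the Frobenius norm of C satisfies ‖C‖_F ≤ (1/√2)·tr(K_R). -/
open Matrix

noncomputable section

/-- Frobenius norm of a real square matrix: `√(tr(AᵀA))`. -/
def frobeniusNorm (A : Matrix (Fin 3) (Fin 3) ℝ) : ℝ := Real.sqrt ((Aᵀ * A).trace)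

set_option maxHeartbeats 1000000 in
theorem stmt1 (k1 k2 k3 : ℝ)
    (hk1 : 0 < k1) (hk2 : 0 < k2) (hk3 : 0 < k3)
    (KR : Matrix (Fin 3) (Fin 3) ℝ) (hKR : KR = Matrix.diagonal ![k1, k2, k3])
    (G : Matrix (Fin 3) (Fin 3) ℝ) (hG : Gᵀ * G = 1) (hGdet : G.det = 1)
    (C : Matrix (Fin 3) (Fin 3) ℝ)
    (hC : C = (1 / 2 : ℝ) • ((KR * G).trace • (1 : Matrix (Fin 3) (Fin 3) ℝ) - KR * G)) :
    frobeniusNorm C ≤ (1 / Real.sqrt 2) * KR.trace := by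
  subst hKR hC
  have hS : 0 < k1 + k2 + k3 := by linarith
  have hG' : G * Gᵀ = 1 := mul_eq_one_comm.mp hG
  have r0 := congrFun (congrFun hG' 0) 0
  have r1 := congrFun (congrFun hG' 1) 1
  have r2 := congrFun (congrFun hG' 2) 2
  simp [Matrix.mul_apply, Fin.sum_univ_three, Matrix.one_apply, Matrix.transpose_apply] at r0 r1 r2
  have htr : (Matrix.diagonal ![k1,k2,k3]).trace = k1+k2+k3 := by
    simp [Matrix.trace, Matrix.diag, Fin.sum_univ_three]
  rw [frobeniusNorm, htr]
  rw [show (1/Real.sqrt 2)*(k1+k2+k3) = Real.sqrt ((k1+k2+k3)^2/2) by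
    rw [Real.sqrt_div (sq_nonneg _), Real.sqrt_sq hS.le, one_div, inv_mul_eq_div]]
  apply Real.sqrt_le_sqrt
  simp only [Matrix.trace, Matrix.diag, Matrix.mul_apply, Fin.sum_univ_three,
    Matrix.smul_apply, Matrix.sub_apply, Matrix.one_apply, Matrix.transpose_apply,
    Matrix.diagonal_apply, Matrix.cons_val_zero, Matrix.cons_val_one, Matrix.head_cons,
    Matrix.head_fin_const, Matrix.cons_val_fin_one, Matrix.cons_val_two, Matrix.tail_cons]
  norm_num [Fin.ext_iff]
  have ha : G 0 0 ≤ 1 := by nlinarith [sq_nonneg (G 0 0 - 1), sq_nonneg (G 0 1), sq_nonneg (G 0 2)]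
  have ha' : -1 ≤ G 0 0 := by nlinarith [sq_nonneg (G 0 0 + 1), sq_nonneg (G 0 1), sq_nonneg (G 0 2)]
  have hb : G 1 1 ≤ 1 := by nlinarith [sq_nonneg (G 1 1 - 1), sq_nonneg (G 1 0), sq_nonneg (G 1 2)]
  have hb' : -1 ≤ G 1 1 := by nlinarith [sq_nonneg (G 1 1 + 1), sq_nonneg (G 1 0), sq_nonneg (G 1 2)]
  have hc : G 2 2 ≤ 1 := by nlinarith [sq_nonneg (G 2 2 - 1), sq_nonneg (G 2 0), sq_nonneg (G 2 1)]
  have hc' : -1 ≤ G 2 2 := by nlinarith [sq_nonneg (G 2 2 + 1), sq_nonneg (G 2 0), sq_nonneg (G 2 1)]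
  have hub : k1 * G 0 0 + k2 * G 1 1 + k3 * G 2 2 ≤ k1 + k2 + k3 := by
    nlinarith [mul_le_of_le_one_right hk1.le ha, mul_le_of_le_one_right hk2.le hb,
      mul_le_of_le_one_right hk3.le hc]
  have hlb : -(k1 + k2 + k3) ≤ k1 * G 0 0 + k2 * G 1 1 + k3 * G 2 2 := by
    nlinarith [mul_le_mul_of_nonneg_left ha' hk1.le, mul_le_mul_of_nonneg_left hb' hk2.le,
      mul_le_mul_of_nonneg_left hc' hk3.le]
  have ht2 : (k1 * G 0 0 + k2 * G 1 1 + k3 * G 2 2)^2 ≤ (k1 + k2 + k3)^2 := by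
    nlinarith [hub, hlb]
  have e1 : k1^2 * (G 0 0 * G 0 0 + G 0 1 * G 0 1 + G 0 2 * G 0 2) = k1^2 * 1 := by rw [r0]
  have e2 : k2^2 * (G 1 0 * G 1 0 + G 1 1 * G 1 1 + G 1 2 * G 1 2) = k2^2 * 1 := by rw [r1]
  have e3 : k3^2 * (G 2 0 * G 2 0 + G 2 1 * G 2 1 + G 2 2 * G 2 2) = k3^2 * 1 := by rw [r2]
  nlinarith [ht2, e1, e2, e3, mul_pos hk1 hk2, mul_pos hk1 hk3, mul_pos hk2 hk3]
end
end

section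
/- Let K_R = diag(k1,k2,k3) be a diagonal matrix with distinct positive entries, let R, R_d ∈ SO(3), set Q = R_dᵀ R, b₃ = R e₃ and b₃,d = R_d e₃ (where e₃ = (0,0,1)). Define Ψ_K(Q) = (1/2)·tr(K_R(I₃ − Q)) and e_{K,R}(Q) = (1/2)·vee(K_R Q − Qᵀ K_R). If Ψ_K(Q) < ψ for some ψ with 0 < ψ < h1, then ‖b₃,d − (b₃,dᵀ b₃)·b₃‖ ≤ √(4·g2/h1)·‖e_{K,R}(Q)‖, where g2 = h3/(h1(h1 − ψ)). -/
open Matrix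

noncomputable section

private lemma aux_diag_le_one {a b c : ℝ} (h : a * a + b * b + c * c = 1) : a ≤ 1 := by
  nlinarith [sq_nonneg (a - 1), sq_nonneg b, sq_nonneg c]

private lemma aux_F_nonneg {u f s t : ℝ} (hu : 0 ≤ u) (hj : u * f = f ^ 2 + s ^ 2 + t ^ 2) :
    0 ≤ f := by nlinarith [sq_nonneg s, sq_nonneg t, sq_nonneg f]

private lemma aux_pos_right {a b : ℝ} (ha : 0 < a) (h : 0 < a * b) : 0 < b := by
  nlinarith

set_option maxHeartbeats 1000000


theorem stmt2 (k1 k2 k3 ψ : ℝ)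
    (hk1 : 0 < k1) (hk2 : 0 < k2) (hk3 : 0 < k3)
    (hd12 : k1 ≠ k2) (hd13 : k1 ≠ k3) (hd23 : k2 ≠ k3)
    (KR : Matrix (Fin 3) (Fin 3) ℝ) (hKR : KR = Matrix.diagonal ![k1, k2, k3])
    (R Rd : Matrix (Fin 3) (Fin 3) ℝ)
    (hR : Rᵀ * R = 1) (hRdet : R.det = 1)
    (hRd : Rdᵀ * Rd = 1) (hRddet : Rd.det = 1)
    (Q : Matrix (Fin 3) (Fin 3) ℝ) (hQ : Q = Rdᵀ * R)
    (e3 : Fin 3 → ℝ) (he3 : e3 = ![0, 0, 1])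
    (b3 b3d : Fin 3 → ℝ) (hb3 : b3 = R.mulVec e3) (hb3d : b3d = Rd.mulVec e3)
    (h1 h2 h3 g2 ΨK : ℝ) (eKR : Fin 3 → ℝ)
    (hh1 : h1 = min (k1 + k2) (min (k1 + k3) (k2 + k3)))
    (hh2 : h2 = max ((k1 - k2) ^ 2) (max ((k1 - k3) ^ 2) ((k2 - k3) ^ 2)))
    (hh3 : h3 = max (k1 + k2) (max (k1 + k3) (k2 + k3)))
    (hg2 : g2 = h3 / (h1 * (h1 - ψ)))
    (hΨK : ΨK = (1 / 2) * (KR * (1 - Q)).trace)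
    (heKR : eKR = (1 / 2 : ℝ) • vee (KR * Q - Qᵀ * KR))
    (hψpos : 0 < ψ) (hψlt : ψ < h1) (hΨ : ΨK < ψ) :
    euclNorm (b3d - (b3d ⬝ᵥ b3) • b3) ≤ Real.sqrt (4 * g2 / h1) * euclNorm eKR := by
  -- basic positivity of the gains
  have hh1a : h1 ≤ k2 + k3 := by rw [hh1]; exact le_trans (min_le_right _ _) (min_le_right _ _)
  have hh1b : h1 ≤ k1 + k3 := by rw [hh1]; exact le_trans (min_le_right _ _) (min_le_left _ _)
  have hh1c : h1 ≤ k1 + k2 := by rw [hh1]; exact min_le_left _ _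
  have hh3a : k2 + k3 ≤ h3 := by rw [hh3]; exact le_trans (le_max_right _ _) (le_max_right _ _)
  have hh3b : k1 + k3 ≤ h3 := by rw [hh3]; exact le_trans (le_max_left _ _) (le_max_right _ _)
  have hh3c : k1 + k2 ≤ h3 := by rw [hh3]; exact le_max_left _ _
  have h1pos : 0 < h1 := lt_trans hψpos hψlt
  have h13 : h1 ≤ h3 := le_trans hh1c hh3c
  have hψd : 0 < h1 - ψ := by linarith
  -- Q is a rotation matrix
  have hRd' : Rd * Rdᵀ = 1 := mul_eq_one_comm.mp hRd
  have hQo : Qᵀ * Q = 1 := by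
    rw [hQ, Matrix.transpose_mul, Matrix.transpose_transpose, Matrix.mul_assoc,
      ← Matrix.mul_assoc Rd, hRd', Matrix.one_mul, hR]
  have hQo2 : Q * Qᵀ = 1 := mul_eq_one_comm.mp hQo
  have hQdet : Q.det = 1 := by
    rw [hQ, Matrix.det_mul, Matrix.det_transpose, hRddet, hRdet, one_mul]
  have hadj : Q.adjugate = Qᵀ := by
    have h3' : Q * Q.adjugate = 1 := by rw [Matrix.mul_adjugate, hQdet, one_smul]
    calc Q.adjugate = 1 * Q.adjugate := (one_mul _).symm
      _ = Qᵀ * Q * Q.adjugate := by rw [hQo]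
      _ = Qᵀ * (Q * Q.adjugate) := by rw [Matrix.mul_assoc]
      _ = Qᵀ := by rw [h3', Matrix.mul_one]
  -- scalar orthonormality constraints: columns
  have hc00 : Q 0 0 * Q 0 0 + Q 1 0 * Q 1 0 + Q 2 0 * Q 2 0 = 1 := by
    have := congrFun (congrFun hQo 0) 0
    simpa [Matrix.mul_apply, Fin.sum_univ_three, Matrix.one_apply] using this
  have hc11 : Q 0 1 * Q 0 1 + Q 1 1 * Q 1 1 + Q 2 1 * Q 2 1 = 1 := by
    have := congrFun (congrFun hQo 1) 1
    simpa [Matrix.mul_apply, Fin.sum_univ_three, Matrix.one_apply] using this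
  have hc22 : Q 0 2 * Q 0 2 + Q 1 2 * Q 1 2 + Q 2 2 * Q 2 2 = 1 := by
    have := congrFun (congrFun hQo 2) 2
    simpa [Matrix.mul_apply, Fin.sum_univ_three, Matrix.one_apply] using this
  have hc01 : Q 0 0 * Q 0 1 + Q 1 0 * Q 1 1 + Q 2 0 * Q 2 1 = 0 := by
    have := congrFun (congrFun hQo 0) 1
    simpa [Matrix.mul_apply, Fin.sum_univ_three, Matrix.one_apply] using this
  have hc02 : Q 0 0 * Q 0 2 + Q 1 0 * Q 1 2 + Q 2 0 * Q 2 2 = 0 := by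
    have := congrFun (congrFun hQo 0) 2
    simpa [Matrix.mul_apply, Fin.sum_univ_three, Matrix.one_apply] using this
  have hc12 : Q 0 1 * Q 0 2 + Q 1 1 * Q 1 2 + Q 2 1 * Q 2 2 = 0 := by
    have := congrFun (congrFun hQo 1) 2
    simpa [Matrix.mul_apply, Fin.sum_univ_three, Matrix.one_apply] using this
  -- rows
  have hr00 : Q 0 0 * Q 0 0 + Q 0 1 * Q 0 1 + Q 0 2 * Q 0 2 = 1 := by
    have := congrFun (congrFun hQo2 0) 0
    simpa [Matrix.mul_apply, Fin.sum_univ_three, Matrix.one_apply] using this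
  have hr11 : Q 1 0 * Q 1 0 + Q 1 1 * Q 1 1 + Q 1 2 * Q 1 2 = 1 := by
    have := congrFun (congrFun hQo2 1) 1
    simpa [Matrix.mul_apply, Fin.sum_univ_three, Matrix.one_apply] using this
  have hr01 : Q 0 0 * Q 1 0 + Q 0 1 * Q 1 1 + Q 0 2 * Q 1 2 = 0 := by
    have := congrFun (congrFun hQo2 0) 1
    simpa [Matrix.mul_apply, Fin.sum_univ_three, Matrix.one_apply] using this
  have hr02 : Q 0 0 * Q 2 0 + Q 0 1 * Q 2 1 + Q 0 2 * Q 2 2 = 0 := by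
    have := congrFun (congrFun hQo2 0) 2
    simpa [Matrix.mul_apply, Fin.sum_univ_three, Matrix.one_apply] using this
  have hr12 : Q 1 0 * Q 2 0 + Q 1 1 * Q 2 1 + Q 1 2 * Q 2 2 = 0 := by
    have := congrFun (congrFun hQo2 1) 2
    simpa [Matrix.mul_apply, Fin.sum_univ_three, Matrix.one_apply] using this
  -- cofactor identities (adjugate = transpose)
  have hco00 : Q 0 0 = Q 1 1 * Q 2 2 - Q 1 2 * Q 2 1 := by
    have := congrFun (congrFun hadj 0) 0
    rw [Matrix.adjugate_fin_three] at this; simpa using this.symm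
  have hco11 : Q 1 1 = Q 0 0 * Q 2 2 - Q 0 2 * Q 2 0 := by
    have := congrFun (congrFun hadj 1) 1
    rw [Matrix.adjugate_fin_three] at this; simpa using this.symm
  have hco22 : Q 2 2 = Q 0 0 * Q 1 1 - Q 0 1 * Q 1 0 := by
    have := congrFun (congrFun hadj 2) 2
    rw [Matrix.adjugate_fin_three] at this; simpa using this.symm
  have hco10 : Q 1 0 = -(Q 0 1 * Q 2 2) + Q 0 2 * Q 2 1 := by
    have := congrFun (congrFun hadj 0) 1
    rw [Matrix.adjugate_fin_three] at this; simpa using this.symm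
  have hco01 : Q 0 1 = -(Q 1 0 * Q 2 2) + Q 1 2 * Q 2 0 := by
    have := congrFun (congrFun hadj 1) 0
    rw [Matrix.adjugate_fin_three] at this; simpa using this.symm
  have hco20 : Q 2 0 = Q 0 1 * Q 1 2 - Q 0 2 * Q 1 1 := by
    have := congrFun (congrFun hadj 0) 2
    rw [Matrix.adjugate_fin_three] at this; simpa using this.symm
  have hco02 : Q 0 2 = Q 1 0 * Q 2 1 - Q 1 1 * Q 2 0 := by
    have := congrFun (congrFun hadj 2) 0
    rw [Matrix.adjugate_fin_three] at this; simpa using this.symm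
  have hco21 : Q 2 1 = -(Q 0 0 * Q 1 2) + Q 0 2 * Q 1 0 := by
    have := congrFun (congrFun hadj 1) 2
    rw [Matrix.adjugate_fin_three] at this; simpa using this.symm
  have hco12 : Q 1 2 = -(Q 0 0 * Q 2 1) + Q 0 1 * Q 2 0 := by
    have := congrFun (congrFun hadj 2) 1
    rw [Matrix.adjugate_fin_three] at this; simpa using this.symm
  -- abbreviations
  set F1 : ℝ := 1 + Q 0 0 - Q 1 1 - Q 2 2 with hF1def
  set F2 : ℝ := 1 - Q 0 0 + Q 1 1 - Q 2 2 with hF2def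
  set F3 : ℝ := 1 - Q 0 0 - Q 1 1 + Q 2 2 with hF3def
  set U : ℝ := 3 - Q 0 0 - Q 1 1 - Q 2 2 with hUdef
  set W : ℝ := 1 + Q 0 0 + Q 1 1 + Q 2 2 with hWdef
  set D1 : ℝ := Q 2 1 - Q 1 2 with hD1def
  set D2 : ℝ := Q 0 2 - Q 2 0 with hD2def
  set D3 : ℝ := Q 1 0 - Q 0 1 with hD3def
  set S1 : ℝ := Q 2 1 + Q 1 2 with hS1def
  set S2 : ℝ := Q 0 2 + Q 2 0 with hS2def
  set S3 : ℝ := Q 1 0 + Q 0 1 with hS3def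
  set E1 : ℝ := k3 * Q 2 1 - k2 * Q 1 2 with hE1def
  set E2 : ℝ := k1 * Q 0 2 - k3 * Q 2 0 with hE2def
  set E3 : ℝ := k2 * Q 1 0 - k1 * Q 0 1 with hE3def
  set T : ℝ := E1 ^ 2 + E2 ^ 2 + E3 ^ 2 with hTdef
  -- key polynomial identities
  have hJ1 : U * F1 = F1 ^ 2 + S3 ^ 2 + S2 ^ 2 := by
    simp only [hF1def, hUdef, hS2def, hS3def]
    linear_combination (-1 : ℝ) * hc00 + (-1 : ℝ) * hr00 + (-2 : ℝ) * hco11 + (-2 : ℝ) * hco22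
  have hJ2 : U * F2 = F2 ^ 2 + S3 ^ 2 + S1 ^ 2 := by
    simp only [hF2def, hUdef, hS1def, hS3def]
    linear_combination (-1 : ℝ) * hc11 + (-1 : ℝ) * hr11 + (-2 : ℝ) * hco00 + (-2 : ℝ) * hco22
  have hJ3 : U * F3 = F3 ^ 2 + S2 ^ 2 + S1 ^ 2 := by
    simp only [hF3def, hUdef, hS1def, hS2def]
    linear_combination (-1 : ℝ) * hc00 + hr00 + (-1 : ℝ) * hc11 + hr11 + (-2 : ℝ) * hc22
      + (-2 : ℝ) * hco00 + (-2 : ℝ) * hco11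
  have hI0 : D1 ^ 2 + D2 ^ 2 + D3 ^ 2 = U * W := by
    simp only [hD1def, hD2def, hD3def, hUdef, hWdef]
    linear_combination hc00 + hc11 + hc22 + (-2 : ℝ) * hco00 + (-2 : ℝ) * hco11 + (-2 : ℝ) * hco22
  have hI1 : S1 * W = D2 * D3 := by
    simp only [hS1def, hD2def, hD3def, hWdef]
    linear_combination hc12 + hr12 + hco12 + hco21
  have hI2 : S2 * W = D3 * D1 := by
    simp only [hS2def, hD3def, hD1def, hWdef]
    linear_combination hc02 + hr02 + hco02 + hco20
  have hI3 : S3 * W = D1 * D2 := by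
    simp only [hS3def, hD1def, hD2def, hWdef]
    linear_combination hc01 + hr01 + hco01 + hco10
  -- diagonal bounds
  have hq00le : Q 0 0 ≤ 1 := aux_diag_le_one hr00
  have hq11le : Q 1 1 ≤ 1 := aux_diag_le_one (by linarith [hr11] : Q 1 1 * Q 1 1 + Q 1 0 * Q 1 0 + Q 1 2 * Q 1 2 = 1)
  have hq22le : Q 2 2 ≤ 1 := aux_diag_le_one (by linarith [hc22] : Q 2 2 * Q 2 2 + Q 0 2 * Q 0 2 + Q 1 2 * Q 1 2 = 1)
  have hU0 : 0 ≤ U := by rw [hUdef]; linarith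
  -- nonnegativity of F's
  have hF1n : 0 ≤ F1 := aux_F_nonneg hU0 hJ1
  have hF2n : 0 ≤ F2 := aux_F_nonneg hU0 hJ2
  have hF3n : 0 ≤ F3 := aux_F_nonneg hU0 hJ3
  -- value of ΨK
  have hΨs : ΨK = (1 / 2) * (k1 * (1 - Q 0 0) + k2 * (1 - Q 1 1) + k3 * (1 - Q 2 2)) := by
    rw [hΨK, hKR]
    rw [Matrix.trace_fin_three]
    simp [Matrix.mul_apply, Fin.sum_univ_three, Matrix.diagonal, Matrix.one_apply]
    try ring
  have hΨlow : h1 * (F1 + F2 + F3) ≤ 4 * ΨK := by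
    have hexp : 4 * ΨK = (k2 + k3) * F1 + (k1 + k3) * F2 + (k1 + k2) * F3 := by
      rw [hΨs, hF1def, hF2def, hF3def]; ring
    linarith [hexp, mul_le_mul_of_nonneg_right hh1a hF1n, mul_le_mul_of_nonneg_right hh1b hF2n,
      mul_le_mul_of_nonneg_right hh1c hF3n]
  have hUF : U = F1 + F2 + F3 := by rw [hUdef, hF1def, hF2def, hF3def]; ring
  have hUW : 4 * (h1 - ψ) < h1 * W := by
    have hu : h1 * U < 4 * ψ := by rw [hUF]; linarith
    have hW4 : h1 * W = 4 * h1 - h1 * U := by rw [hWdef, hUdef]; ring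
    linarith
  have hWpos : 0 < W := aux_pos_right h1pos (by linarith)
  -- the main lower bound on T
  have hT : T * W ^ 2 =
      (W ^ 2 / 4) * ((k2 + k3) ^ 2 * D1 ^ 2 + (k1 + k3) ^ 2 * D2 ^ 2 + (k1 + k2) ^ 2 * D3 ^ 2)
      + (1 / 4) * ((k3 - k2) ^ 2 * (D2 * D3) ^ 2 + (k1 - k3) ^ 2 * (D3 * D1) ^ 2
          + (k2 - k1) ^ 2 * (D1 * D2) ^ 2) := by
    have e1 : E1 * W = (k2 + k3) / 2 * D1 * W + (k3 - k2) / 2 * (D2 * D3) := by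
      rw [← hI1]; rw [hE1def, hS1def, hD1def]; ring
    have e2 : E2 * W = (k1 + k3) / 2 * D2 * W + (k1 - k3) / 2 * (D3 * D1) := by
      rw [← hI2]; rw [hE2def, hS2def, hD2def]; ring
    have e3' : E3 * W = (k1 + k2) / 2 * D3 * W + (k2 - k1) / 2 * (D1 * D2) := by
      rw [← hI3]; rw [hE3def, hS3def, hD3def]; ring
    have q1 := congrArg (· ^ 2) e1
    have q2 := congrArg (· ^ 2) e2
    have q3 := congrArg (· ^ 2) e3'
    rw [hTdef]
    linear_combination q1 + q2 + q3
  have hka2 : h1 ^ 2 ≤ (k2 + k3) ^ 2 := pow_le_pow_left₀ (le_of_lt h1pos) hh1a 2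
  have hkb2 : h1 ^ 2 ≤ (k1 + k3) ^ 2 := pow_le_pow_left₀ (le_of_lt h1pos) hh1b 2
  have hkc2 : h1 ^ 2 ≤ (k1 + k2) ^ 2 := pow_le_pow_left₀ (le_of_lt h1pos) hh1c 2
  have hTW2 : (h1 ^ 2 / 4) * (U * W) * W ^ 2 ≤ T * W ^ 2 := by
    have hsum : (h1 ^ 2 / 4) * (U * W) * W ^ 2 = (W ^ 2 / 4) *
        (h1 ^ 2 * D1 ^ 2 + h1 ^ 2 * D2 ^ 2 + h1 ^ 2 * D3 ^ 2) := by
      rw [← hI0]; ring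
    rw [hsum, hT]
    have d1 : h1 ^ 2 * D1 ^ 2 + h1 ^ 2 * D2 ^ 2 + h1 ^ 2 * D3 ^ 2 ≤
        (k2 + k3) ^ 2 * D1 ^ 2 + (k1 + k3) ^ 2 * D2 ^ 2 + (k1 + k2) ^ 2 * D3 ^ 2 := by
      linarith [mul_le_mul_of_nonneg_right hka2 (sq_nonneg D1),
        mul_le_mul_of_nonneg_right hkb2 (sq_nonneg D2),
        mul_le_mul_of_nonneg_right hkc2 (sq_nonneg D3)]
    have d2 := mul_le_mul_of_nonneg_left d1 (show (0:ℝ) ≤ W ^ 2 / 4 by positivity)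
    have d3 : (0:ℝ) ≤ (1 / 4) * ((k3 - k2) ^ 2 * (D2 * D3) ^ 2 + (k1 - k3) ^ 2 * (D3 * D1) ^ 2
        + (k2 - k1) ^ 2 * (D1 * D2) ^ 2) := by positivity
    linarith [d2, d3]
  have hTfin : (h1 ^ 2 / 4) * (U * W) ≤ T := by
    have hW2 : (0 : ℝ) < W ^ 2 := by positivity
    exact le_of_mul_le_mul_right hTW2 hW2
  -- final polynomial inequality
  have hcore : (1 - Q 2 2 ^ 2) * (h1 ^ 2 * (h1 - ψ)) ≤ h3 * T := by
    have e1 : 1 - Q 2 2 ^ 2 ≤ F1 + F2 := by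
      have hid : F1 + F2 - (1 - Q 2 2 ^ 2) = (1 - Q 2 2) ^ 2 := by
        rw [hF1def, hF2def]; ring
      linarith [sq_nonneg (1 - Q 2 2), hid]
    have e2 : F1 + F2 ≤ U := by rw [hUF]; linarith
    have m1 : 4 * (h1 - ψ) * U ≤ (h1 * W) * U :=
      mul_le_mul_of_nonneg_right (le_of_lt hUW) hU0
    have hXnn : 0 ≤ (h1 ^ 2 / 4) * (U * W) := by positivity
    have m2 : h1 ^ 2 * (h1 - ψ) * U ≤ ((h1 ^ 2 / 4) * (U * W)) * h1 := by
      have := mul_le_mul_of_nonneg_left m1 (show (0:ℝ) ≤ h1 ^ 2 / 4 by positivity)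
      linarith [this]
    have m3 : ((h1 ^ 2 / 4) * (U * W)) * h1 ≤ ((h1 ^ 2 / 4) * (U * W)) * h3 :=
      mul_le_mul_of_nonneg_left h13 hXnn
    have m4 : ((h1 ^ 2 / 4) * (U * W)) * h3 ≤ T * h3 :=
      mul_le_mul_of_nonneg_right hTfin (by linarith)
    have m5 : (1 - Q 2 2 ^ 2) * (h1 ^ 2 * (h1 - ψ)) ≤ h1 ^ 2 * (h1 - ψ) * U := by
      have e3'' : 1 - Q 2 2 ^ 2 ≤ U := by linarith
      have := mul_le_mul_of_nonneg_right e3'' (show (0:ℝ) ≤ h1 ^ 2 * (h1 - ψ) by positivity)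
      linarith [this]
    rw [mul_comm h3 T]
    exact le_trans (le_trans (le_trans m5 m2) m3) m4
  -- components of eKR
  have heK0 : eKR 0 = (1 / 2) * (k3 * Q 2 1 - k2 * Q 1 2) := by
    rw [heKR, hKR]
    simp [vee, Matrix.mul_apply, Fin.sum_univ_three, Matrix.diagonal]
    try ring
  have heK1 : eKR 1 = (1 / 2) * (k1 * Q 0 2 - k3 * Q 2 0) := by
    rw [heKR, hKR]
    simp [vee, Matrix.mul_apply, Fin.sum_univ_three, Matrix.diagonal]
    try ring
  have heK2 : eKR 2 = (1 / 2) * (k2 * Q 1 0 - k1 * Q 0 1) := by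
    rw [heKR, hKR]
    simp [vee, Matrix.mul_apply, Fin.sum_univ_three, Matrix.diagonal]
    try ring
  -- b3 facts
  have hb3i : ∀ i, b3 i = R i 2 := by
    intro i
    rw [hb3, he3]
    simp [Matrix.mulVec, dotProduct, Fin.sum_univ_three]
  have hb3di : ∀ i, b3d i = Rd i 2 := by
    intro i
    rw [hb3d, he3]
    simp [Matrix.mulVec, dotProduct, Fin.sum_univ_three]
  have hdot : b3d ⬝ᵥ b3 = Q 2 2 := by
    have hq22 := congrFun (congrFun hQ 2) 2
    simp only [Matrix.mul_apply, Fin.sum_univ_three, Matrix.transpose_apply] at hq22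
    simp [dotProduct, Fin.sum_univ_three, hb3i, hb3di, hq22]
    try ring
  have hR22 : R 0 2 * R 0 2 + R 1 2 * R 1 2 + R 2 2 * R 2 2 = 1 := by
    have := congrFun (congrFun hR 2) 2
    simpa [Matrix.mul_apply, Fin.sum_univ_three, Matrix.one_apply] using this
  have hRd22 : Rd 0 2 * Rd 0 2 + Rd 1 2 * Rd 1 2 + Rd 2 2 * Rd 2 2 = 1 := by
    have := congrFun (congrFun hRd 2) 2
    simpa [Matrix.mul_apply, Fin.sum_univ_three, Matrix.one_apply] using this
  have hq22e : Rd 0 2 * R 0 2 + Rd 1 2 * R 1 2 + Rd 2 2 * R 2 2 = Q 2 2 := by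
    have hq22 := congrFun (congrFun hQ 2) 2
    simp only [Matrix.mul_apply, Fin.sum_univ_three, Matrix.transpose_apply] at hq22
    rw [hq22]; try ring
  -- the sum of squares on the left
  have hA : ∑ i, ((b3d - (b3d ⬝ᵥ b3) • b3) i) ^ 2 = 1 - Q 2 2 ^ 2 := by
    rw [hdot]
    simp only [Fin.sum_univ_three, Pi.sub_apply, Pi.smul_apply, smul_eq_mul]
    rw [hb3i 0, hb3i 1, hb3i 2, hb3di 0, hb3di 1, hb3di 2]
    linear_combination hRd22 + Q 2 2 ^ 2 * hR22 + (-2 * Q 2 2) * hq22e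
  have hC : ∑ i, (eKR i) ^ 2 = T / 4 := by
    simp only [Fin.sum_univ_three]
    rw [heK0, heK1, heK2, hTdef, hE1def, hE2def, hE3def]
    ring
  -- assemble the square roots
  have h3pos : 0 < h3 := lt_of_lt_of_le h1pos h13
  have hBnn : 0 ≤ 4 * g2 / h1 := by
    rw [hg2]
    positivity
  rw [euclNorm, euclNorm, hA, hC, ← Real.sqrt_mul hBnn]
  apply Real.sqrt_le_sqrt
  have hrw : 4 * g2 / h1 * (T / 4) = h3 * T / (h1 ^ 2 * (h1 - ψ)) := by
    rw [hg2]
    field_simp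
  rw [hrw, le_div_iff₀ (by positivity)]
  exact hcore
end
end

section
/- Fix d ≥ 1 and n ≥ 1. For each of two Bézier curves B¹(t) = Σ_{l=0}^n b_l^n(t)·c¹_l and B²(t) = Σ_{l=0}^n b_l^n(t)·c²_l with control points c¹_l, c²_l ∈ ℝ^d and Bernstein basis b_l^n(t) = C(n,l)·t^l·(1−t)^{n−l}, t ∈ [0,1], suppose there exist ε₁, ε₂ ≥ 0 such that for every l, min{‖c¹_l − c¹_0‖₁, ‖c¹_l − c¹_n‖₁} ≤ ε₁ and min{‖c²_l − c²_0‖₁, ‖c²_l − c²_n‖₁} ≤ ε₂. Let cent(Bⁱ) = (1/(n+1))·Σ_{l=0}^n cⁱ_l. If ‖cent(B¹) − cent(B²)‖₁ ≥ ‖c¹_0 − c¹_n‖₁ + ‖c²_0 − c²_n‖₁ + 2(ε₁ + ε₂) + ε_inter·√d for some ε_inter ≥ 0, then ‖B¹(t) − B²(t)‖₂ ≥ ε_inter for all t ∈ [0,1]. -/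
noncomputable section

lemma aux_convex {d m : ℕ} (w : Fin m → ℝ) (hw : ∀ l, 0 ≤ w l) (c : Fin m → Fin d → ℝ) :
    (∑ i, |(∑ l, w l • c l) i|) ≤ ∑ l, w l * ∑ i, |c l i| := by
  have h1 : ∀ i, |(∑ l, w l • c l) i| ≤ ∑ l, w l * |c l i| := by
    intro i
    simp only [Finset.sum_apply, Pi.smul_apply, smul_eq_mul]
    refine (Finset.abs_sum_le_sum_abs _ _).trans ?_
    exact Finset.sum_le_sum fun l _ => by rw [abs_mul, abs_of_nonneg (hw l)]
  calc (∑ i, |(∑ l, w l • c l) i|) ≤ ∑ i, ∑ l, w l * |c l i| :=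
        Finset.sum_le_sum fun i _ => h1 i
    _ = ∑ l, ∑ i, w l * |c l i| := Finset.sum_comm
    _ = ∑ l, w l * ∑ i, |c l i| := by simp [Finset.mul_sum]

lemma aux_convex' {d m : ℕ} (w : Fin m → ℝ) (hw : ∀ l, 0 ≤ w l) (hws : ∑ l, w l = 1)
    (c : Fin m → Fin d → ℝ) (M : ℝ) (hM : ∀ l, (∑ i, |c l i|) ≤ M) :
    (∑ i, |(∑ l, w l • c l) i|) ≤ M := by
  calc (∑ i, |(∑ l, w l • c l) i|) ≤ ∑ l, w l * ∑ i, |c l i| := aux_convex w hw c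
    _ ≤ ∑ l, w l * M := Finset.sum_le_sum fun l _ =>
        mul_le_mul_of_nonneg_left (hM l) (hw l)
    _ = M := by rw [← Finset.sum_mul, hws, one_mul]

lemma aux_tri {d : ℕ} (x y z : Fin d → ℝ) :
    (∑ i, |x i - y i|) ≤ (∑ i, |x i - z i|) + ∑ i, |z i - y i| := by
  rw [← Finset.sum_add_distrib]
  exact Finset.sum_le_sum fun i _ => abs_sub_le _ _ _

lemma aux_symm {d : ℕ} (x y : Fin d → ℝ) :
    (∑ i, |x i - y i|) = ∑ i, |y i - x i| :=
  Finset.sum_congr rfl fun i _ => abs_sub_comm _ _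

lemma curve_near_cent {d n : ℕ} (c : Fin (n + 1) → Fin d → ℝ) (w : Fin (n + 1) → ℝ)
    (hw : ∀ l, 0 ≤ w l) (hws : ∑ l, w l = 1) (ε : ℝ) (hε : 0 ≤ ε)
    (hc : ∀ l, min (∑ i, |c l i - c 0 i|) (∑ i, |c l i - c (Fin.last n) i|) ≤ ε) :
    (∑ i, |(∑ l, w l • c l) i - ((1 / (n + 1) : ℝ) • ∑ l, c l) i|) ≤
      (∑ i, |c 0 i - c (Fin.last n) i|) + 2 * ε := by
  set D := ∑ i, |c 0 i - c (Fin.last n) i| with hD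
  have hD0 : 0 ≤ D := Finset.sum_nonneg fun i _ => abs_nonneg _
  have hDsym : (∑ i, |c (Fin.last n) i - c 0 i|) = D := (aux_symm _ _).symm
  have hpair : ∀ a b, (∑ i, |c a i - c b i|) ≤ D + 2 * ε := by
    intro a b
    have ha := (min_le_iff).mp (hc a)
    have hb := (min_le_iff).mp (hc b)
    rcases ha with ha | ha <;> rcases hb with hb | hb
    · have h1 := aux_tri (c a) (c b) (c 0)
      have h2 := aux_symm (c 0) (c b)
      rw [h2] at h1; linarith
    · have h1 := aux_tri (c a) (c b) (c 0)
      have h2 := aux_tri (c 0) (c b) (c (Fin.last n))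
      have h3 := aux_symm (c (Fin.last n)) (c b)
      rw [h3] at h2; linarith
    · have h1 := aux_tri (c a) (c b) (c (Fin.last n))
      have h2 := aux_tri (c (Fin.last n)) (c b) (c 0)
      have h3 := aux_symm (c 0) (c b)
      rw [h3] at h2; linarith
    · have h1 := aux_tri (c a) (c b) (c (Fin.last n))
      have h2 := aux_symm (c (Fin.last n)) (c b)
      rw [h2] at h1; linarith
  have hv : ∑ _k : Fin (n + 1), (1 / (n + 1) : ℝ) = 1 := by
    rw [Finset.sum_const, Finset.card_univ, Fintype.card_fin, nsmul_eq_mul]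
    push_cast
    field_simp
  set cent : Fin d → ℝ := (1 / (n + 1) : ℝ) • ∑ l, c l with hcent
  have hcentd : ∀ a, (∑ i, |c a i - cent i|) ≤ D + 2 * ε := by
    intro a
    have hrw : c a - cent = ∑ k : Fin (n + 1), (1 / (n + 1) : ℝ) • (c a - c k) := by
      have step : (∑ k : Fin (n + 1), (1 / (n + 1) : ℝ) • (c a - c k)) =
          (∑ _k : Fin (n + 1), (1 / (n + 1) : ℝ)) • c a -
            (1 / (n + 1) : ℝ) • ∑ k, c k := by
        simp only [smul_sub, Finset.sum_sub_distrib, Finset.smul_sum]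
        congr 1
        rw [Finset.sum_smul]
      rw [hcent, step, hv, one_smul]
    calc (∑ i, |c a i - cent i|)
        = ∑ i, |(∑ k : Fin (n + 1), (1 / (n + 1) : ℝ) • (c a - c k)) i| := by
          refine Finset.sum_congr rfl fun i _ => ?_
          rw [show c a i - cent i = (c a - cent) i from rfl, hrw]
      _ ≤ D + 2 * ε := by
          refine aux_convex' _ (fun k => by positivity) hv _ _ fun k => ?_
          simp only [Pi.sub_apply]
          exact hpair a k
  have hfin : (fun i => (∑ l, w l • c l) i - cent i) =
      fun i => (∑ l, w l • (c l - cent)) i := by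
    funext i
    simp only [Finset.sum_apply, Pi.smul_apply, Pi.sub_apply, smul_eq_mul, mul_sub,
      Finset.sum_sub_distrib, ← Finset.sum_mul, hws, one_mul]
  calc (∑ i, |(∑ l, w l • c l) i - cent i|)
      = ∑ i, |(∑ l, w l • (c l - cent)) i| := by
        refine Finset.sum_congr rfl fun i _ => ?_
        rw [congrFun hfin i]
    _ ≤ D + 2 * ε := by
        refine aux_convex' _ hw hws _ _ fun l => ?_
        simp only [Pi.sub_apply]
        exact hcentd l

theorem stmt4 (d n : ℕ) (hd : 1 ≤ d) (hn : 1 ≤ n)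
    (c1 c2 : Fin (n + 1) → Fin d → ℝ)
    (ε1 ε2 εinter : ℝ) (hε1 : 0 ≤ ε1) (hε2 : 0 ≤ ε2) (hεinter : 0 ≤ εinter)
    (l1norm l2norm : (Fin d → ℝ) → ℝ)
    (hl1 : l1norm = fun x => ∑ i, |x i|)
    (hl2 : l2norm = fun x => Real.sqrt (∑ i, x i ^ 2))
    (B1 B2 : ℝ → Fin d → ℝ)
    (hB1 : B1 = fun t => ∑ l : Fin (n + 1),
      ((n.choose l : ℝ) * t ^ (l : ℕ) * (1 - t) ^ (n - (l : ℕ))) • c1 l)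
    (hB2 : B2 = fun t => ∑ l : Fin (n + 1),
      ((n.choose l : ℝ) * t ^ (l : ℕ) * (1 - t) ^ (n - (l : ℕ))) • c2 l)
    (hc1 : ∀ l, min (l1norm (c1 l - c1 0)) (l1norm (c1 l - c1 (Fin.last n))) ≤ ε1)
    (hc2 : ∀ l, min (l1norm (c2 l - c2 0)) (l1norm (c2 l - c2 (Fin.last n))) ≤ ε2)
    (cent1 cent2 : Fin d → ℝ)
    (hcent1 : cent1 = (1 / (n + 1) : ℝ) • ∑ l, c1 l)
    (hcent2 : cent2 = (1 / (n + 1) : ℝ) • ∑ l, c2 l)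
    (hsep : l1norm (cent1 - cent2) ≥
      l1norm (c1 0 - c1 (Fin.last n)) + l1norm (c2 0 - c2 (Fin.last n)) +
        2 * (ε1 + ε2) + εinter * Real.sqrt d) :
    ∀ t ∈ Set.Icc (0 : ℝ) 1, l2norm (B1 t - B2 t) ≥ εinter := by
  intro t ht
  subst hl1 hl2 hB1 hB2 hcent1 hcent2
  simp only [Pi.sub_apply] at hc1 hc2 hsep ⊢
  set w : Fin (n + 1) → ℝ :=
    fun l => (n.choose l : ℝ) * t ^ (l : ℕ) * (1 - t) ^ (n - (l : ℕ)) with hwdef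
  have hw : ∀ l, 0 ≤ w l := by
    intro l
    have h1 : (0:ℝ) ≤ t := ht.1
    have h2 : (0:ℝ) ≤ 1 - t := by linarith [ht.2]
    positivity
  have hws : ∑ l, w l = 1 := by
    rw [Fin.sum_univ_eq_sum_range (fun l => (n.choose l : ℝ) * t ^ l * (1 - t) ^ (n - l))]
    have : ∑ k ∈ Finset.range (n + 1), (n.choose k : ℝ) * t ^ k * (1 - t) ^ (n - k)
        = ∑ k ∈ Finset.range (n + 1), t ^ k * (1 - t) ^ (n - k) * (n.choose k : ℝ) := by
      exact Finset.sum_congr rfl fun k _ => by ring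
    rw [this, ← add_pow]
    simp
  have h1 := curve_near_cent c1 w hw hws ε1 hε1 hc1
  have h2 := curve_near_cent c2 w hw hws ε2 hε2 hc2
  set P : Fin d → ℝ := ∑ l, w l • c1 l with hP
  set Q : Fin d → ℝ := ∑ l, w l • c2 l with hQ
  set C1 : Fin d → ℝ := (1 / (n + 1) : ℝ) • ∑ l, c1 l with hC1
  set C2 : Fin d → ℝ := (1 / (n + 1) : ℝ) • ∑ l, c2 l with hC2
  have hkey : (∑ i, |C1 i - C2 i|) ≤
      ((∑ i, |c1 0 i - c1 (Fin.last n) i|) + 2 * ε1) + (∑ i, |P i - Q i|) +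
        ((∑ i, |c2 0 i - c2 (Fin.last n) i|) + 2 * ε2) := by
    have t1 := aux_tri C1 C2 P
    have t2 := aux_tri P C2 Q
    have s1 := aux_symm C1 P
    rw [s1] at t1
    linarith
  have hL1 : εinter * Real.sqrt d ≤ ∑ i, |P i - Q i| := by linarith
  have hCS : (∑ i, |P i - Q i|) ≤ Real.sqrt d * Real.sqrt (∑ i, (P i - Q i) ^ 2) := by
    have h := sq_sum_le_card_mul_sum_sq (s := Finset.univ) (f := fun i => |P i - Q i|)
    simp only [Finset.card_univ, Fintype.card_fin, sq_abs] at h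
    have h0 : (0:ℝ) ≤ ∑ i, |P i - Q i| := Finset.sum_nonneg fun i _ => abs_nonneg _
    have := Real.sqrt_le_sqrt h
    rw [Real.sqrt_sq h0, Real.sqrt_mul (by positivity)] at this
    exact this
  have hd0 : (0:ℝ) < Real.sqrt d := Real.sqrt_pos.mpr (by exact_mod_cast hd)
  have : εinter * Real.sqrt d ≤ Real.sqrt d * Real.sqrt (∑ i, (P i - Q i) ^ 2) :=
    le_trans hL1 hCS
  rw [mul_comm (Real.sqrt d)] at this
  exact le_of_mul_le_mul_right this hd0
end
end

section
/- Let J be a 3×3 symmetric positive-definite matrix with smallest eigenvalue λ_min(J) > 0, let g1 > 0, c2 > 0, ψ > 0, and α_ψ ∈ [1/2, 1). Let e_R, e_ω ∈ ℝ³ and Ψ₀ ∈ ℝ satisfy g1·‖e_R‖² ≤ Ψ₀, Ψ₀ < α_ψ·ψ, and (1/2)·e_ωᵀ J e_ω ≤ (1 − α_ψ)·ψ. Then (1/2)·e_ωᵀ J e_ω + Ψ₀ + c2·e_Rᵀ e_ω ≤ (1 + c2·√(2·α_ψ·(1 − α_ψ)/(λ_min(J)·g1)))·ψ. -/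
open Matrix

noncomputable section

lemma rayleigh_min (J : Matrix (Fin 3) (Fin 3) ℝ) (hJ : J.PosDef) (x : Fin 3 → ℝ) :
    (⨅ i, hJ.isHermitian.eigenvalues i) * (x ⬝ᵥ x) ≤ x ⬝ᵥ J *ᵥ x := by
  have hH := hJ.isHermitian
  set U : Matrix (Fin 3) (Fin 3) ℝ := (hH.eigenvectorUnitary : Matrix (Fin 3) (Fin 3) ℝ) with hU
  set y : Fin 3 → ℝ := star U *ᵥ x with hy
  have hUU : U * star U = 1 := Matrix.mem_unitaryGroup_iff.mp hH.eigenvectorUnitary.prop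
  have hsU : star U = Uᵀ := by
    rw [Matrix.star_eq_conjTranspose]; ext i j; simp [conjTranspose_apply]
  have hxU : x ᵥ* U = y := by rw [hy, hsU, mulVec_transpose]
  have h1 : x ⬝ᵥ J *ᵥ x = ∑ i, hH.eigenvalues i * y i ^ 2 := by
    conv_lhs => rw [hH.spectral_theorem, Unitary.conjStarAlgAut_apply]
    rw [← hU, ← mulVec_mulVec, ← mulVec_mulVec, dotProduct_mulVec, hxU, ← hy]
    simp only [mulVec_diagonal, dotProduct, Function.comp, RCLike.ofReal_real_eq_id, id]
    exact Finset.sum_congr rfl fun i _ => by ring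
  have h2 : x ⬝ᵥ x = ∑ i, y i ^ 2 := by
    have hk : y ⬝ᵥ y = x ⬝ᵥ x := by
      conv_lhs => rw [dotProduct_comm, dotProduct_mulVec, hsU, ← mulVec_transpose,
        transpose_transpose, mulVec_mulVec, hUU, one_mulVec]
    rw [← hk]
    exact Finset.sum_congr rfl fun i _ => by ring
  rw [h1, h2, Finset.mul_sum]
  exact Finset.sum_le_sum fun i _ =>
    mul_le_mul_of_nonneg_right (ciInf_le (Finite.bddBelow_range _) i) (sq_nonneg _)

theorem stmt10 (J : Matrix (Fin 3) (Fin 3) ℝ) (hJ : J.PosDef)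
    (lamMin : ℝ) (hlamMin : lamMin = ⨅ i, hJ.isHermitian.eigenvalues i) (hlamPos : 0 < lamMin)
    (g1 c2 ψ αψ : ℝ) (hg1 : 0 < g1) (hc2 : 0 < c2) (hψ : 0 < ψ)
    (hαψ : αψ ∈ Set.Ico (1 / 2 : ℝ) 1)
    (eR eω : Fin 3 → ℝ) (Ψ0 : ℝ)
    (hΨlb : g1 * euclNorm eR ^ 2 ≤ Ψ0)
    (hΨub : Ψ0 < αψ * ψ)
    (hω : (1 / 2) * (eω ⬝ᵥ J.mulVec eω) ≤ (1 - αψ) * ψ) :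
    (1 / 2) * (eω ⬝ᵥ J.mulVec eω) + Ψ0 + c2 * (eR ⬝ᵥ eω) ≤
      (1 + c2 * Real.sqrt (2 * αψ * (1 - αψ) / (lamMin * g1))) * ψ := by
  obtain ⟨hαl, hα1⟩ := hαψ
  have hα0 : (0:ℝ) < αψ := by linarith
  have h1α : (0:ℝ) ≤ 1 - αψ := by linarith
  have hsum2R : (0:ℝ) ≤ ∑ i, eR i ^ 2 := Finset.sum_nonneg fun i _ => sq_nonneg _
  have hsum2ω : (0:ℝ) ≤ ∑ i, eω i ^ 2 := Finset.sum_nonneg fun i _ => sq_nonneg _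
  have hnR2 : euclNorm eR ^ 2 = ∑ i, eR i ^ 2 := Real.sq_sqrt hsum2R
  have hray : lamMin * (eω ⬝ᵥ eω) ≤ eω ⬝ᵥ J *ᵥ eω := hlamMin ▸ rayleigh_min J hJ eω
  have hee : eω ⬝ᵥ eω = ∑ i, eω i ^ 2 := by
    simp only [dotProduct]; exact Finset.sum_congr rfl fun i _ => by ring
  set A : ℝ := αψ * ψ / g1 with hA
  set B : ℝ := 2 * (1 - αψ) * ψ / lamMin with hB
  have hA0 : 0 ≤ A := by positivity
  have hB0 : 0 ≤ B := by positivity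
  have hRsq : ∑ i, eR i ^ 2 ≤ A := by
    rw [hA, le_div_iff₀ hg1]; nlinarith [hΨlb, hΨub]
  have hωsq : ∑ i, eω i ^ 2 ≤ B := by
    rw [hB, le_div_iff₀ hlamPos]
    rw [hee] at hray; nlinarith [hray, hω]
  have hCS : eR ⬝ᵥ eω ≤ Real.sqrt (A * B) := by
    have hcs := Finset.sum_mul_sq_le_sq_mul_sq Finset.univ eR eω
    calc eR ⬝ᵥ eω ≤ |eR ⬝ᵥ eω| := le_abs_self _
      _ = Real.sqrt ((eR ⬝ᵥ eω) ^ 2) := (Real.sqrt_sq_eq_abs _).symm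
      _ ≤ Real.sqrt ((∑ i, eR i ^ 2) * (∑ i, eω i ^ 2)) := Real.sqrt_le_sqrt (by
            simpa [dotProduct] using hcs)
      _ ≤ Real.sqrt (A * B) := Real.sqrt_le_sqrt
            (mul_le_mul hRsq hωsq hsum2ω hA0)
  have hABeq : A * B = 2 * αψ * (1 - αψ) / (lamMin * g1) * ψ ^ 2 := by
    rw [hA, hB]; field_simp
  have hsqrtAB : Real.sqrt (A * B) = Real.sqrt (2 * αψ * (1 - αψ) / (lamMin * g1)) * ψ := by
    rw [hABeq, Real.sqrt_mul (by positivity), Real.sqrt_sq hψ.le]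
  rw [hsqrtAB] at hCS
  have hfin : c2 * (eR ⬝ᵥ eω) ≤ c2 * (Real.sqrt (2 * αψ * (1 - αψ) / (lamMin * g1)) * ψ) :=
    mul_le_mul_of_nonneg_left hCS hc2.le
  nlinarith [hω, hΨub, hfin]
end
end

section
/- Let J and K_ω be 3×3 symmetric positive-definite matrices. Let e_R, e_ω : ℝ → ℝ³ be differentiable and Ψ : ℝ → ℝ be differentiable, satisfying for all t ≥ 0: Ψ'(t) = e_R(t)ᵀ e_ω(t) and e_ω'(t) = −J⁻¹(e_R(t) + K_ω e_ω(t)). Define E(t) = (1/2)·e_ω(t)ᵀ J e_ω(t) + Ψ(t). Then E'(t) = −e_ω(t)ᵀ K_ω e_ω(t) ≤ 0 for all t ≥ 0; in particular E is non-increasing, and Ψ(t) ≤ E(0) for all t ≥ 0. -/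
open Matrix

noncomputable section

theorem stmt11 (J Kω : Matrix (Fin 3) (Fin 3) ℝ) (hJ : J.PosDef) (hKω : Kω.PosDef)
    (eR eω : ℝ → Fin 3 → ℝ) (Ψ : ℝ → ℝ)
    (hΨ : ∀ t ≥ (0 : ℝ), HasDerivAt Ψ (eR t ⬝ᵥ eω t) t)
    (heω : ∀ t ≥ (0 : ℝ), HasDerivAt eω (-(J⁻¹.mulVec (eR t + Kω.mulVec (eω t)))) t)
    (E : ℝ → ℝ)
    (hE : E = fun t => (1 / 2) * (eω t ⬝ᵥ J.mulVec (eω t)) + Ψ t) :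
    (∀ t ≥ (0 : ℝ), HasDerivAt E (-(eω t ⬝ᵥ Kω.mulVec (eω t))) t ∧
        -(eω t ⬝ᵥ Kω.mulVec (eω t)) ≤ 0) ∧
      AntitoneOn E (Set.Ici 0) ∧
      ∀ t ≥ (0 : ℝ), Ψ t ≤ E 0 := by
  have hJinv : IsUnit J.det := hJ.det_pos.ne'.isUnit
  -- main derivative claim
  have hd : ∀ t ≥ (0 : ℝ), HasDerivAt E (-(eω t ⬝ᵥ Kω.mulVec (eω t))) t := by
    intro t ht
    set v : Fin 3 → ℝ := -(J⁻¹.mulVec (eR t + Kω.mulVec (eω t))) with hv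
    have hcomp : ∀ i, HasDerivAt (fun s => eω s i) (v i) t :=
      fun i => hasDerivAt_pi.mp (heω t ht) i
    -- derivative of quadratic form
    have hq : HasDerivAt (fun s => eω s ⬝ᵥ J.mulVec (eω s))
        (v ⬝ᵥ J.mulVec (eω t) + eω t ⬝ᵥ J.mulVec v) t := by
      have h1 : HasDerivAt (fun s => eω s ⬝ᵥ J.mulVec (eω s))
          (∑ i, (v i * (J.mulVec (eω t)) i + eω t i * (J.mulVec v) i)) t := by
        simp only [dotProduct, mulVec]
        apply HasDerivAt.fun_sum
        intro i _
        have hJi : HasDerivAt (fun s => (fun j => J i j) ⬝ᵥ eω s)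
            ((fun j => J i j) ⬝ᵥ v) t := by
          simp only [dotProduct]
          exact HasDerivAt.fun_sum fun j _ => (hcomp j).const_mul (J i j)
        exact (hcomp i).mul hJi
      simpa [dotProduct, Finset.sum_add_distrib] using h1
    have hE' : HasDerivAt E
        ((1/2 : ℝ) * (v ⬝ᵥ J.mulVec (eω t) + eω t ⬝ᵥ J.mulVec v) + eR t ⬝ᵥ eω t) t := by
      rw [hE]; exact (hq.const_mul (1/2 : ℝ)).add (hΨ t ht)
    have hJv : J.mulVec v = -(eR t + Kω.mulVec (eω t)) := by
      rw [hv, Matrix.mulVec_neg, Matrix.mulVec_mulVec, Matrix.mul_nonsing_inv _ hJinv,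
        Matrix.one_mulVec]
    have hJt : Jᵀ = J := by
      ext i j
      simpa using congrFun (congrFun hJ.isHermitian.eq i) j
    have hsym : v ⬝ᵥ J.mulVec (eω t) = eω t ⬝ᵥ J.mulVec v := by
      rw [dotProduct_mulVec, ← Matrix.mulVec_transpose, hJt, dotProduct_comm]
    have key : (1/2 : ℝ) * (v ⬝ᵥ J.mulVec (eω t) + eω t ⬝ᵥ J.mulVec v) + eR t ⬝ᵥ eω t
        = -(eω t ⬝ᵥ Kω.mulVec (eω t)) := by
      rw [hsym, hJv]
      have : eω t ⬝ᵥ -(eR t + Kω.mulVec (eω t))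
          = -(eω t ⬝ᵥ eR t) - eω t ⬝ᵥ Kω.mulVec (eω t) := by
        simp [dotProduct_add, dotProduct_neg]; ring
      rw [this, dotProduct_comm (eR t) (eω t)]; ring
    rw [← key]; exact hE'
  have hnonneg : ∀ t, 0 ≤ eω t ⬝ᵥ Kω.mulVec (eω t) := fun t =>
    hKω.posSemidef.dotProduct_mulVec_nonneg (eω t)
  have hJnonneg : ∀ t, 0 ≤ eω t ⬝ᵥ J.mulVec (eω t) := fun t =>
    hJ.posSemidef.dotProduct_mulVec_nonneg (eω t)
  have hanti : AntitoneOn E (Set.Ici 0) := by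
    apply antitoneOn_of_deriv_nonpos (convex_Ici 0)
    · intro x hx
      exact ((hd x hx).differentiableAt).continuousAt.continuousWithinAt
    · intro x hx
      rw [interior_Ici] at hx
      exact ((hd x (le_of_lt hx)).differentiableAt).differentiableWithinAt
    · intro x hx
      rw [interior_Ici] at hx
      rw [(hd x (le_of_lt hx)).deriv]
      exact neg_nonpos.mpr (hnonneg x)
  refine ⟨fun t ht => ⟨hd t ht, neg_nonpos.mpr (hnonneg t)⟩, hanti, fun t ht => ?_⟩
  have h1 : Ψ t ≤ E t := by
    rw [hE]; simp only
    nlinarith [hJnonneg t]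
  exact h1.trans (hanti (Set.self_mem_Ici) ht ht)
end
end

section
/- Let K_p = diag(k_{p1},k_{p2},k_{p3}) and K_v = diag(k_{v1},k_{v2},k_{v3}) be diagonal 3×3 matrices with positive entries, m > 0, and let c1 satisfy 0 < c1 < min_{i=1,2,3} (4·m·k_{pi}·k_{vi})/(k_{vi}² + 4·m·k_{pi}). Then the 6×6 block matrix W1 = (1/(2m))·[[2·c1·K_p, c1·K_v],[c1·K_v, 2m·(K_v − c1·I₃)]] is symmetric positive definite. -/
open Matrix

noncomputable section

lemma quad_pos' {a b c u v : ℝ} (ha : 0 < a) (hd : b^2 < a*c)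
    (h : u ≠ 0 ∨ v ≠ 0) : 0 < a*u^2 + 2*b*u*v + c*v^2 := by
  rcases eq_or_ne v 0 with hv | hv
  · subst hv
    rcases h with h | h
    · have := mul_self_pos.2 h; nlinarith
    · exact absurd rfl h
  · have h1 : 0 < (a*u + b*v)^2 + (a*c - b^2)*v^2 := by
      have := mul_self_pos.2 hv
      nlinarith [sq_nonneg (a*u + b*v)]
    nlinarith

lemma quad_nonneg' {a b c u v : ℝ} (ha : 0 < a) (hd : b^2 < a*c) :
    0 ≤ a*u^2 + 2*b*u*v + c*v^2 := by
  rcases eq_or_ne u 0 with hu | hu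
  · rcases eq_or_ne v 0 with hv | hv
    · simp [hu, hv]
    · exact le_of_lt (quad_pos' ha hd (Or.inr hv))
  · exact le_of_lt (quad_pos' ha hd (Or.inl hu))

theorem stmt13 (kp kv : Fin 3 → ℝ) (hkp : ∀ i, 0 < kp i) (hkv : ∀ i, 0 < kv i)
    (Kp Kv : Matrix (Fin 3) (Fin 3) ℝ)
    (hKp : Kp = Matrix.diagonal kp) (hKv : Kv = Matrix.diagonal kv)
    (m c1 : ℝ) (hm : 0 < m)
    (hc1pos : 0 < c1)
    (hc1lt : c1 < ⨅ i, (4 * m * kp i * kv i) / ((kv i) ^ 2 + 4 * m * kp i))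
    (W1 : Matrix (Fin 3 ⊕ Fin 3) (Fin 3 ⊕ Fin 3) ℝ)
    (hW1 : W1 = (1 / (2 * m) : ℝ) •
      Matrix.fromBlocks ((2 * c1 : ℝ) • Kp) (c1 • Kv) (c1 • Kv)
        ((2 * m : ℝ) • (Kv - c1 • (1 : Matrix (Fin 3) (Fin 3) ℝ)))) :
    W1.IsSymm ∧ W1.PosDef := by
  subst hKp hKv hW1
  have hlt : ∀ i, c1 < (4 * m * kp i * kv i) / ((kv i) ^ 2 + 4 * m * kp i) := fun i =>
    lt_of_lt_of_le hc1lt (ciInf_le (Finite.bddBelow_range _) i)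
  have hden : ∀ i, 0 < (kv i) ^ 2 + 4 * m * kp i :=
    fun i => by nlinarith [sq_nonneg (kv i), mul_pos hm (hkp i)]
  have hkey : ∀ i, c1 * ((kv i)^2 + 4 * m * kp i) < 4 * m * kp i * kv i :=
    fun i => (lt_div_iff₀ (hden i)).mp (hlt i)
  have hdisc : ∀ i, (c1 * kv i)^2 < (2*c1*kp i) * (2*m*(kv i - c1)) := by
    intro i
    nlinarith [mul_lt_mul_of_pos_left (hkey i) hc1pos]
  have ha : ∀ i, 0 < 2*c1*kp i := fun i => by nlinarith [hkp i]
  have hsymm : ((1 / (2 * m) : ℝ) •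
      Matrix.fromBlocks ((2 * c1 : ℝ) • Matrix.diagonal kp) (c1 • Matrix.diagonal kv)
        (c1 • Matrix.diagonal kv)
        ((2 * m : ℝ) • (Matrix.diagonal kv - c1 • (1 : Matrix (Fin 3) (Fin 3) ℝ)))).IsSymm := by
    unfold Matrix.IsSymm
    simp [fromBlocks_transpose, transpose_smul, Matrix.transpose_sub, diagonal_transpose]
  refine ⟨hsymm, Matrix.posDef_iff_dotProduct_mulVec.mpr ⟨?_, ?_⟩⟩
  · rw [Matrix.IsHermitian, Matrix.conjTranspose_eq_transpose_of_trivial]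
    exact hsymm
  · intro x hx
    have hquad : x ⬝ᵥ ((1 / (2 * m) : ℝ) •
        Matrix.fromBlocks ((2 * c1 : ℝ) • Matrix.diagonal kp) (c1 • Matrix.diagonal kv)
          (c1 • Matrix.diagonal kv)
          ((2 * m : ℝ) • (Matrix.diagonal kv - c1 • (1 : Matrix (Fin 3) (Fin 3) ℝ)))) *ᵥ x
        = (1/(2*m)) * ∑ i : Fin 3,
            ((2*c1*kp i) * (x (Sum.inl i))^2 + 2*(c1*kv i)*(x (Sum.inl i))*(x (Sum.inr i))
              + (2*m*(kv i - c1)) * (x (Sum.inr i))^2) := by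
      simp [mulVec, dotProduct, Fintype.sum_sum_type, fromBlocks, diagonal, Finset.mul_sum,
        Fin.sum_univ_three, Matrix.one_apply, Matrix.sub_apply, Matrix.smul_apply]
      ring
    simp only [star_trivial, RCLike.re_to_real]
    rw [hquad]
    have hsum : 0 < ∑ i : Fin 3,
        ((2*c1*kp i) * (x (Sum.inl i))^2 + 2*(c1*kv i)*(x (Sum.inl i))*(x (Sum.inr i))
          + (2*m*(kv i - c1)) * (x (Sum.inr i))^2) := by
      obtain ⟨j, hj⟩ := Function.ne_iff.mp hx
      have hnn : ∀ i ∈ Finset.univ, (0:ℝ) ≤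
          (2*c1*kp i) * (x (Sum.inl i))^2 + 2*(c1*kv i)*(x (Sum.inl i))*(x (Sum.inr i))
            + (2*m*(kv i - c1)) * (x (Sum.inr i))^2 :=
        fun i _ => quad_nonneg' (ha i) (hdisc i)
      rcases j with i | i
      · exact Finset.sum_pos' hnn ⟨i, Finset.mem_univ i,
          quad_pos' (ha i) (hdisc i) (Or.inl hj)⟩
      · exact Finset.sum_pos' hnn ⟨i, Finset.mem_univ i,
          quad_pos' (ha i) (hdisc i) (Or.inr hj)⟩
    positivity
end
end

section
/- Let J = diag(J₁,J₂,J₃), K_ω = diag(k_{ω1},k_{ω2},k_{ω3}), and K_R = diag(k_{R1},k_{R2},k_{R3}) be diagonal 3×3 matrices with positive entries, and let c2 satisfy 0 < c2 < min{ min_i √2·k_{ωi}/tr(K_R), min_i (4·J_i·k_{ωi})/(2√2·J_i·tr(K_R) + k_{ωi}²) }. Then the 6×6 block matrix W2 = [[c2·J⁻¹, (c2/2)·K_ω·J⁻¹],[(c2/2)·K_ω·J⁻¹, K_ω − (c2/√2)·tr(K_R)·I₃]] is symmetric positive definite. -/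
open Matrix

noncomputable section

lemma aux_symm14 (a b d : Fin 3 → ℝ) :
    (Matrix.fromBlocks (diagonal a) (diagonal b) (diagonal b) (diagonal d)).IsSymm := by
  unfold Matrix.IsSymm
  rw [fromBlocks_transpose, diagonal_transpose, diagonal_transpose, diagonal_transpose]

lemma aux_pd14 (a b d : Fin 3 → ℝ) (ha : ∀ i, 0 < a i) (hdet : ∀ i, b i * b i < a i * d i) :
    (Matrix.fromBlocks (diagonal a) (diagonal b) (diagonal b) (diagonal d)).PosDef := by
  rw [Matrix.posDef_iff_dotProduct_mulVec]
  constructor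
  · rw [Matrix.IsHermitian, conjTranspose, Matrix.IsSymm.eq (aux_symm14 a b d)]
    ext p q; simp
  · intro x hx
    set u : Fin 3 → ℝ := fun i => x (Sum.inl i)
    set v : Fin 3 → ℝ := fun i => x (Sum.inr i)
    have key : star x ⬝ᵥ (Matrix.fromBlocks (diagonal a) (diagonal b) (diagonal b) (diagonal d)) *ᵥ x
        = ∑ i : Fin 3, (a i * u i * u i + 2 * (b i * u i * v i) + d i * v i * v i) := by
      simp only [dotProduct, Fintype.sum_sum_type, fromBlocks_mulVec, Sum.elim_inl, Sum.elim_inr,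
        Pi.add_apply, Function.comp, mulVec_diagonal, star_trivial]
      rw [← Finset.sum_add_distrib]
      exact Finset.sum_congr rfl fun i _ => by show u i * _ + v i * _ = _; ring
    rw [key]
    have hpos : ∀ i : Fin 3, u i ≠ 0 ∨ v i ≠ 0 →
        0 < a i * u i * u i + 2 * (b i * u i * v i) + d i * v i * v i := by
      intro i hi
      have hv : v i ≠ 0 → 0 < a i * u i * u i + 2 * (b i * u i * v i) + d i * v i * v i := by
        intro h
        nlinarith [sq_nonneg (a i * u i + b i * v i), ha i, hdet i,
          mul_pos (sub_pos.mpr (hdet i)) (mul_self_pos.mpr h)]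
      rcases hi with h | h
      · by_cases hv0 : v i = 0
        · rw [hv0]; ring_nf
          nlinarith [mul_pos (ha i) (mul_self_pos.mpr h)]
        · exact hv hv0
      · exact hv h
    have hterm : ∀ i : Fin 3, 0 ≤ a i * u i * u i + 2 * (b i * u i * v i) + d i * v i * v i := by
      intro i
      by_cases h : u i ≠ 0 ∨ v i ≠ 0
      · exact (hpos i h).le
      · push_neg at h
        rw [h.1, h.2]; ring_nf; exact le_refl 0
    obtain ⟨p, hp⟩ := Function.ne_iff.mp hx
    apply Finset.sum_pos'
    · intro i _; exact hterm i
    · cases p with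
      | inl i => exact ⟨i, Finset.mem_univ i, hpos i (Or.inl hp)⟩
      | inr i => exact ⟨i, Finset.mem_univ i, hpos i (Or.inr hp)⟩

theorem stmt14 (Jd kω kR : Fin 3 → ℝ)
    (hJd : ∀ i, 0 < Jd i) (hkω : ∀ i, 0 < kω i) (hkR : ∀ i, 0 < kR i)
    (J Kω KR : Matrix (Fin 3) (Fin 3) ℝ)
    (hJ : J = Matrix.diagonal Jd) (hKω : Kω = Matrix.diagonal kω)
    (hKR : KR = Matrix.diagonal kR)
    (c2 : ℝ) (hc2pos : 0 < c2)
    (hc2lt : c2 < min (⨅ i, Real.sqrt 2 * kω i / KR.trace)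
      (⨅ i, (4 * Jd i * kω i) / (2 * Real.sqrt 2 * Jd i * KR.trace + (kω i) ^ 2)))
    (W2 : Matrix (Fin 3 ⊕ Fin 3) (Fin 3 ⊕ Fin 3) ℝ)
    (hW2 : W2 = Matrix.fromBlocks (c2 • J⁻¹) ((c2 / 2 : ℝ) • (Kω * J⁻¹))
      ((c2 / 2 : ℝ) • (Kω * J⁻¹))
      (Kω - ((c2 / Real.sqrt 2) * KR.trace) • (1 : Matrix (Fin 3) (Fin 3) ℝ))) :
    W2.IsSymm ∧ W2.PosDef := by
  set T : ℝ := KR.trace with hTdef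
  have hT : 0 < T := by
    rw [hTdef, hKR, Matrix.trace_diagonal]
    exact Finset.sum_pos (fun i _ => hkR i) Finset.univ_nonempty
  have h1 : ∀ i, c2 < Real.sqrt 2 * kω i / T := fun i =>
    lt_of_lt_of_le (lt_min_iff.mp hc2lt).1 (ciInf_le (Finite.bddBelow_range _) i)
  have h2 : ∀ i, c2 < (4 * Jd i * kω i) / (2 * Real.sqrt 2 * Jd i * T + (kω i) ^ 2) := fun i =>
    lt_of_lt_of_le (lt_min_iff.mp hc2lt).2 (ciInf_le (Finite.bddBelow_range _) i)
  have hs2 : (0:ℝ) < Real.sqrt 2 := by positivity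
  have hs2sq : Real.sqrt 2 * Real.sqrt 2 = 2 := Real.mul_self_sqrt (by norm_num)
  have hdiv : c2 / Real.sqrt 2 = c2 * Real.sqrt 2 / 2 := by
    rw [div_eq_iff hs2.ne']; nlinarith [hs2sq]
  -- the three diagonal functions
  set a : Fin 3 → ℝ := fun i => c2 * (Jd i)⁻¹ with hadef
  set b : Fin 3 → ℝ := fun i => c2 / 2 * (kω i * (Jd i)⁻¹) with hbdef
  set d : Fin 3 → ℝ := fun i => kω i - c2 / Real.sqrt 2 * T with hddef
  have hJinv : J⁻¹ = diagonal (fun i => (Jd i)⁻¹) := by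
    rw [hJ]
    apply Matrix.inv_eq_right_inv
    rw [diagonal_mul_diagonal]
    convert Matrix.diagonal_one with i
    exact mul_inv_cancel₀ (hJd i).ne'
  have e1 : c2 • (diagonal fun i => (Jd i)⁻¹) = diagonal a := by
    ext i j; by_cases h : i = j <;> simp [diagonal_apply, h, hadef]
  have e2 : (c2 / 2 : ℝ) • (diagonal kω * diagonal fun i => (Jd i)⁻¹) = diagonal b := by
    rw [diagonal_mul_diagonal]
    ext i j; by_cases h : i = j <;> simp [diagonal_apply, h, hbdef]
  have e3 : diagonal kω - ((c2 / Real.sqrt 2) * T) • (1 : Matrix (Fin 3) (Fin 3) ℝ)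
      = diagonal d := by
    ext i j
    by_cases h : i = j <;>
      simp [diagonal_apply, Matrix.one_apply, h, hddef, Matrix.sub_apply, Matrix.smul_apply]
  have hblock : W2 = Matrix.fromBlocks (diagonal a) (diagonal b) (diagonal b) (diagonal d) := by
    rw [hW2, hKω, hJinv, e1, e2, e3]
  have ha : ∀ i, 0 < a i := fun i => by
    have := hJd i; simp only [hadef]; positivity
  have hdet : ∀ i, b i * b i < a i * d i := by
    intro i
    have hJi := hJd i
    have hden : 0 < 2 * Real.sqrt 2 * Jd i * T + (kω i) ^ 2 := by positivity
    have h2' : c2 * (2 * Real.sqrt 2 * Jd i * T + (kω i) ^ 2) < 4 * Jd i * kω i :=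
      (lt_div_iff₀ hden).mp (h2 i)
    have hJJ : (Jd i)⁻¹ * Jd i = 1 := inv_mul_cancel₀ hJi.ne'
    have key : c2 / 2 * kω i * (c2 / 2 * kω i) < c2 * Jd i * (kω i - c2 / Real.sqrt 2 * T) := by
      rw [hdiv]
      nlinarith [mul_lt_mul_of_pos_left h2' hc2pos, hs2sq]
    simp only [hadef, hbdef, hddef]
    calc (c2 / 2 * (kω i * (Jd i)⁻¹)) * (c2 / 2 * (kω i * (Jd i)⁻¹))
        = (c2 / 2 * kω i * (c2 / 2 * kω i)) * ((Jd i)⁻¹ * (Jd i)⁻¹) := by ring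
      _ < (c2 * Jd i * (kω i - c2 / Real.sqrt 2 * T)) * ((Jd i)⁻¹ * (Jd i)⁻¹) := by
          apply mul_lt_mul_of_pos_right key (by positivity)
      _ = (c2 * (Jd i)⁻¹) * (kω i - c2 / Real.sqrt 2 * T) * ((Jd i)⁻¹ * Jd i) := by ring
      _ = (c2 * (Jd i)⁻¹) * (kω i - c2 / Real.sqrt 2 * T) := by rw [hJJ, mul_one]
  rw [hblock]
  exact ⟨aux_symm14 a b d, aux_pd14 a b d ha hdet⟩
end
end
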